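/- arXiv:2505.11087 — 3 statements merged into one kernel-verified Lean document; each statement's English description precedes it below -/
import Mathlib

section
/- Let N ≥ 1, let v : {1,…,N} → ℤ, and let B be an invertible N × N matrix over K = ℂ((t)) such that val(B_{ij}) ≥ v_j − v_i and val((B^{-1})_{ij}) ≥ v_j − v_i for all i, j. Define complex N × N matrices B̄ and C̄ by B̄_{ij} = coeff_{v_j − v_i}(B_{ij}) and C̄_{ij} = coeff_{v_j − v_i}((B^{-1})_{ij}). Then B̄ · C̄ equals the N × N identity matrix over ℂ; in particular the leading-order matrix B̄ lies in GL(N, ℂ). -/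
lemma coeff_mul_of_le_orderTop (f g : LaurentSeries ℂ) (a b : ℤ)
    (hf : (a : WithTop ℤ) ≤ f.orderTop) (hg : (b : WithTop ℤ) ≤ g.orderTop) :
    (f * g).coeff (a + b) = f.coeff a * g.coeff b := by
  have hfz : ∀ x : ℤ, x < a → f.coeff x = 0 := fun x hx =>
    HahnSeries.coeff_eq_zero_of_lt_orderTop (lt_of_lt_of_le (by exact_mod_cast hx) hf)
  have hgz : ∀ y : ℤ, y < b → g.coeff y = 0 := fun y hy =>
    HahnSeries.coeff_eq_zero_of_lt_orderTop (lt_of_lt_of_le (by exact_mod_cast hy) hg)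
  rw [HahnSeries.coeff_mul]
  have hsub : Finset.antidiagonal f.isPWO_support g.isPWO_support (a + b)
      ⊆ ({(a, b)} : Finset (ℤ × ℤ)) := by
    rintro ⟨x, y⟩ hxy
    rw [Finset.mem_antidiagonal] at hxy
    obtain ⟨hx, hy, hsum⟩ := hxy
    rw [Finset.mem_singleton, Prod.mk.injEq]
    have hxa : a ≤ x := le_of_not_gt fun h => hx (hfz x h)
    have hyb : b ≤ y := le_of_not_gt fun h => hy (hgz y h)
    constructor <;> omega
  rw [Finset.sum_subset hsub]
  · rw [Finset.sum_singleton]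
  · rintro ⟨x, y⟩ hxy hnot
    rw [Finset.mem_singleton, Prod.mk.injEq] at hxy
    obtain ⟨rfl, rfl⟩ := hxy
    rw [Finset.mem_antidiagonal] at hnot
    simp only [Set.mem_setOf_eq, HahnSeries.mem_support] at hnot
    push_neg at hnot
    by_cases h : f.coeff x = 0
    · simp [h]
    by_cases h' : g.coeff y = 0
    · simp [h']
    · exact (hnot h h').elim

/-- Let `B` be an invertible `N × N` matrix over `K = ℂ((t))` (with inverse `C`), whose
entries satisfy `val (B i j) ≥ v j - v i` and `val (C i j) ≥ v j - v i` for a weight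
vector `v : Fin N → ℤ` (here `val` is the `t`-adic valuation, `val 0 = ∞`).  Then the
complex leading-order matrices `B̄ i j = coeff_{v j - v i} (B i j)` and
`C̄ i j = coeff_{v j - v i} (C i j)` satisfy `B̄ * C̄ = 1`; in particular `B̄ ∈ GL(N, ℂ)`. -/
theorem leading_order_matrix_invertible
    {N : ℕ} (hN : 1 ≤ N) (v : Fin N → ℤ)
    (B C : Matrix (Fin N) (Fin N) (LaurentSeries ℂ))
    (hBC : B * C = 1) (hCB : C * B = 1)
    (hB : ∀ i j, ((v j - v i : ℤ) : WithTop ℤ) ≤ (B i j).orderTop)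
    (hC : ∀ i j, ((v j - v i : ℤ) : WithTop ℤ) ≤ (C i j).orderTop)
    (Bbar Cbar : Matrix (Fin N) (Fin N) ℂ)
    (hBbar : ∀ i j, Bbar i j = (B i j).coeff (v j - v i))
    (hCbar : ∀ i j, Cbar i j = (C i j).coeff (v j - v i)) :
    Bbar * Cbar = 1 ∧ IsUnit Bbar := by
  have key : Bbar * Cbar = 1 := by
    ext i k
    rw [Matrix.mul_apply]
    have : ∀ j, Bbar i j * Cbar j k = ((B i j) * (C j k)).coeff (v k - v i) := by
      intro j
      rw [hBbar, hCbar]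
      have := coeff_mul_of_le_orderTop (B i j) (C j k) (v j - v i) (v k - v j)
        (hB i j) (hC j k)
      rw [show v j - v i + (v k - v j) = v k - v i by ring] at this
      exact this.symm
    simp_rw [this]
    have hsum : ∑ j, ((B i j) * (C j k)).coeff (v k - v i)
        = ((B * C) i k).coeff (v k - v i) := by
      rw [Matrix.mul_apply]
      exact (map_sum (HahnSeries.coeff.addMonoidHom (v k - v i)) (fun j => B i j * C j k) Finset.univ).symm
    rw [hsum, hBC]
    by_cases hik : i = k
    · subst hik
      simp [Matrix.one_apply]
    · simp [Matrix.one_apply, hik, sub_eq_zero, Ne.symm hik]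
  refine ⟨key, ?_⟩
  have := invertibleOfRightInverse Bbar Cbar key
  exact isUnit_of_invertible Bbar
end

section
/- The Kontorovich functional ℱ attains its minimum on 𝒫_c: there exists φ₀ ∈ 𝒫_c such that ℱ(φ₀) ≤ ℱ(φ) for all φ ∈ 𝒫_c. -/
open MeasureTheory BoundedContinuousFunction

/-- The `c`-transform of a function `φ : X → ℝ`: `φ^c (p) = sup_{x ∈ X} (c x p - φ x)`. -/
noncomputable def ctransX {X P : Type*} (c : X → P → ℝ) (φ : X → ℝ) : P → ℝ :=
  fun p => ⨆ x, (c x p - φ x)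

/-- The `c`-transform of a function `ψ : P → ℝ`: `ψ^c (x) = sup_{p ∈ P} (c x p - ψ p)`. -/
noncomputable def ctransP {X P : Type*} (c : X → P → ℝ) (ψ : P → ℝ) : X → ℝ :=
  fun x => ⨆ p, (c x p - ψ p)

/-- The class `𝒫_c` of `c`-convex potentials on `X`: the image of the `c`-transform of
bounded functions on `P`. -/
noncomputable def Pc {X P : Type*} (c : X → P → ℝ) : Set (X → ℝ) :=
  {φ | ∃ ψ : P → ℝ, (∃ M, ∀ p, |ψ p| ≤ M) ∧ φ = ctransP c ψ}

/-- The Kontorovich functional `ℱ(φ) = ∫_X φ dμ + ∫_P φ^c dν`. -/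
noncomputable def kantF {X P : Type*} [MeasurableSpace X] [MeasurableSpace P]
    (c : X → P → ℝ) (μ : Measure X) (ν : Measure P) (φ : X → ℝ) : ℝ :=
  (∫ x, φ x ∂μ) + ∫ p, ctransX c φ p ∂ν

set_option linter.unusedSectionVars false

section Aux

lemma kant_sup_le_sup_add {ι : Type*} [Nonempty ι] {f g : ι → ℝ} (hg : BddAbove (Set.range g))
    {ε : ℝ} (h : ∀ i, f i ≤ g i + ε) : (⨆ i, f i) ≤ (⨆ i, g i) + ε :=
  ciSup_le fun i => (h i).trans (add_le_add_left (le_ciSup hg i) ε)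

lemma kant_sup_sub_sup_le {ι : Type*} [Nonempty ι] {f g : ι → ℝ} (hg : BddAbove (Set.range g))
    {ε : ℝ} (h : ∀ i, f i ≤ g i + ε) : (⨆ i, f i) - (⨆ i, g i) ≤ ε :=
  sub_le_iff_le_add.2 ((kant_sup_le_sup_add hg h).trans_eq (add_comm _ _))

variable {X P : Type*} [Nonempty X] [Nonempty P] {c : X → P → ℝ} {Mc M M' : ℝ}

lemma kant_bdd_range (hMc : ∀ x p, |c x p| ≤ Mc) {ψ : P → ℝ} (hψ : ∀ p, |ψ p| ≤ M) (x : X) :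
    BddAbove (Set.range fun p => c x p - ψ p) := by
  refine ⟨Mc + M, ?_⟩
  rintro _ ⟨p, rfl⟩
  have h1 := abs_le.1 (hMc x p); have h2 := abs_le.1 (hψ p)
  simp only [Set.mem_setOf_eq]
  linarith [h1.2, h2.1]

lemma kant_abs_ctransP_le (hMc : ∀ x p, |c x p| ≤ Mc) {ψ : P → ℝ} (hψ : ∀ p, |ψ p| ≤ M)
    (x : X) : |ctransP c ψ x| ≤ Mc + M := by
  rw [abs_le]
  constructor
  · obtain p₀ : P := Classical.arbitrary P
    have h := le_ciSup (kant_bdd_range hMc hψ x) p₀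
    have h1 := abs_le.1 (hMc x p₀); have h2 := abs_le.1 (hψ p₀)
    show -(Mc + M) ≤ ⨆ p, c x p - ψ p
    linarith [h1.1, h2.2]
  · refine ciSup_le fun p => ?_
    have h1 := abs_le.1 (hMc x p); have h2 := abs_le.1 (hψ p)
    linarith [h1.2, h2.1]

/-- Lipschitz in `ψ`. -/
lemma kant_ctransP_diff_le (hMc : ∀ x p, |c x p| ≤ Mc) {ψ ψ' : P → ℝ}
    (hψ : ∀ p, |ψ p| ≤ M) (hψ' : ∀ p, |ψ' p| ≤ M') {ε : ℝ}
    (h : ∀ p, |ψ p - ψ' p| ≤ ε) (x : X) :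
    |ctransP c ψ x - ctransP c ψ' x| ≤ ε := by
  rw [abs_sub_le_iff]
  refine ⟨kant_sup_sub_sup_le (kant_bdd_range hMc hψ' x) fun p => ?_,
    kant_sup_sub_sup_le (kant_bdd_range hMc hψ x) fun p => ?_⟩
  · show c x p - ψ p ≤ c x p - ψ' p + ε
    have := abs_le.1 (h p); linarith [this.2]
  · show c x p - ψ' p ≤ c x p - ψ p + ε
    have := abs_le.1 (h p); linarith [this.1]

/-- Equicontinuity-type bound. -/
lemma kant_ctransP_cont_diff (hMc : ∀ x p, |c x p| ≤ Mc) {ψ : P → ℝ}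
    (hψ : ∀ p, |ψ p| ≤ M) {x x' : X} {ε : ℝ}
    (h : ∀ p, |c x p - c x' p| ≤ ε) :
    |ctransP c ψ x - ctransP c ψ x'| ≤ ε := by
  rw [abs_sub_le_iff]
  refine ⟨kant_sup_sub_sup_le (kant_bdd_range hMc hψ x') fun p => ?_,
    kant_sup_sub_sup_le (kant_bdd_range hMc hψ x) fun p => ?_⟩
  · show c x p - ψ p ≤ c x' p - ψ p + ε
    have := abs_le.1 (h p); linarith [this.2]
  · show c x' p - ψ p ≤ c x p - ψ p + ε
    have := abs_le.1 (h p); linarith [this.1]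

lemma kant_double_le (hMc : ∀ x p, |c x p| ≤ Mc) {ψ : P → ℝ} (hψ : ∀ p, |ψ p| ≤ M) (p : P) :
    ctransX c (ctransP c ψ) p ≤ ψ p := by
  refine ciSup_le fun x => ?_
  have h := le_ciSup (kant_bdd_range hMc hψ x) p
  show c x p - ctransP c ψ x ≤ ψ p
  have : c x p - ψ p ≤ ctransP c ψ x := h
  linarith

lemma kant_ctransP_anti (hMc : ∀ x p, |c x p| ≤ Mc) {ψ₁ ψ₂ : P → ℝ}
    (hψ₁ : ∀ p, |ψ₁ p| ≤ M) (h : ∀ p, ψ₁ p ≤ ψ₂ p) (x : X) :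
    ctransP c ψ₂ x ≤ ctransP c ψ₁ x :=
  ciSup_le fun p => (sub_le_sub_left (h p) _).trans (le_ciSup (kant_bdd_range hMc hψ₁ x) p)

lemma kant_ctransX_eq_ctransP (c : X → P → ℝ) (φ : X → ℝ) :
    ctransX c φ = ctransP (fun p x => c x p) φ := rfl

lemma kant_ctransP_eq_ctransX (c : X → P → ℝ) (ψ : P → ℝ) :
    ctransP c ψ = ctransX (fun p x => c x p) ψ := rfl

lemma kant_triple (hMc : ∀ x p, |c x p| ≤ Mc) {ψ : P → ℝ} (hψ : ∀ p, |ψ p| ≤ M) :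
    ctransP c (ctransX c (ctransP c ψ)) = ctransP c ψ := by
  have hMc' : ∀ p x, |(fun p x => c x p) p x| ≤ Mc := fun p x => hMc x p
  have hφ : ∀ x, |ctransP c ψ x| ≤ Mc + M := kant_abs_ctransP_le hMc hψ
  funext x
  apply le_antisymm
  · -- ctransP c (ctransX c φ) ≤ φ, flipped double_le
    have := kant_double_le (c := fun p x => c x p) hMc' (ψ := ctransP c ψ) hφ x
    rwa [← kant_ctransX_eq_ctransP, ← kant_ctransP_eq_ctransX] at this
  · -- antitone applied to ctransX c φ ≤ ψ
    have hle : ∀ p, ctransX c (ctransP c ψ) p ≤ ψ p := kant_double_le hMc hψ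
    have hb : ∀ p, |ctransX c (ctransP c ψ) p| ≤ Mc + (Mc + M) := fun p => by
      have := kant_abs_ctransP_le (c := fun p x => c x p) hMc' (ψ := ctransP c ψ) hφ p
      rwa [← kant_ctransX_eq_ctransP] at this
    exact kant_ctransP_anti hMc hb hle x

lemma kant_ctransP_shift (hMc : ∀ x p, |c x p| ≤ Mc) {ψ : P → ℝ} (hψ : ∀ p, |ψ p| ≤ M)
    (t : ℝ) (x : X) : ctransP c (fun p => ψ p + t) x = ctransP c ψ x - t := by
  have hψt : ∀ p, |ψ p + t| ≤ M + |t| := fun p =>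
    (abs_add_le _ _).trans (add_le_add (hψ p) le_rfl)
  apply le_antisymm
  · rw [sub_eq_add_neg]
    exact kant_sup_le_sup_add (kant_bdd_range hMc hψ x)
      (f := fun p => c x p - (ψ p + t)) (fun p => le_of_eq (by ring))
  · rw [sub_le_iff_le_add]
    exact kant_sup_le_sup_add (kant_bdd_range hMc hψt x)
      (f := fun p => c x p - ψ p) (fun p => le_of_eq (by ring))

variable [MetricSpace X] [MetricSpace P] [CompactSpace X] [CompactSpace P]

lemma kant_uc (hc : Continuous fun q : X × P => c q.1 q.2) :
    ∀ ε > 0, ∃ δ > 0, ∀ x x' : X, dist x x' < δ → ∀ p, |c x p - c x' p| ≤ ε := by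
  intro ε hε
  have huc : UniformContinuous (fun q : X × P => c q.1 q.2) :=
    CompactSpace.uniformContinuous_of_continuous hc
  obtain ⟨δ, hδ, H⟩ := Metric.uniformContinuous_iff.1 huc ε hε
  refine ⟨δ, hδ, fun x x' hxx' p => ?_⟩
  have hd : dist ((x, p) : X × P) ((x', p)) = dist x x' := by
    rw [Prod.dist_eq, dist_self]
    exact max_eq_left dist_nonneg
  have := H (a := (x, p)) (b := (x', p)) (by rw [hd]; exact hxx')
  rw [Real.dist_eq] at this
  exact this.le

lemma kant_ctransP_continuous (hc : Continuous fun q : X × P => c q.1 q.2)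
    (hMc : ∀ x p, |c x p| ≤ Mc) {ψ : P → ℝ} (hψ : ∀ p, |ψ p| ≤ M) :
    Continuous (ctransP c ψ) := by
  rw [Metric.continuous_iff]
  intro x ε hε
  obtain ⟨δ, hδ, H⟩ := kant_uc hc (ε / 2) (half_pos hε)
  refine ⟨δ, hδ, fun x' hx' => ?_⟩
  rw [Real.dist_eq]
  exact lt_of_le_of_lt (kant_ctransP_cont_diff hMc hψ (fun p => H x' x hx' p))
    (half_lt_self hε)

end Aux

lemma kant_integrable_of_bdd {X : Type*} [MetricSpace X] [MeasurableSpace X] [BorelSpace X]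
    {μ : MeasureTheory.Measure X} [MeasureTheory.IsFiniteMeasure μ] {f : X → ℝ} {M : ℝ}
    (hf : Continuous f) (hM : ∀ x, |f x| ≤ M) : MeasureTheory.Integrable f μ :=
  ⟨hf.aestronglyMeasurable, MeasureTheory.HasFiniteIntegral.of_bounded (C := M)
    (Filter.Eventually.of_forall fun x => by simpa [Real.norm_eq_abs] using hM x)⟩

/-- For compact metric spaces `X`, `P`, a continuous cost `c : X × P → ℝ` and Borel
probability measures `μ`, `ν`, the Kontorovich functional attains its minimum on `𝒫_c`. -/
theorem kantorovich_minimizer_exists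
    {X P : Type*}
    [MetricSpace X] [CompactSpace X] [Nonempty X]
    [MeasurableSpace X] [BorelSpace X]
    [MetricSpace P] [CompactSpace P] [Nonempty P]
    [MeasurableSpace P] [BorelSpace P]
    (c : X → P → ℝ) (hc : Continuous fun q : X × P => c q.1 q.2)
    (μ : Measure X) [IsProbabilityMeasure μ]
    (ν : Measure P) [IsProbabilityMeasure ν] :
    ∃ φ₀ ∈ Pc c, ∀ φ ∈ Pc c, kantF c μ ν φ₀ ≤ kantF c μ ν φ := by
  -- bound on c
  obtain ⟨q₀, -, hq₀⟩ := isCompact_univ.exists_isMaxOn (Set.univ_nonempty)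
    ((continuous_abs.comp hc).continuousOn (s := Set.univ))
  set Mc : ℝ := |c q₀.1 q₀.2| with hMcdef
  have hMc : ∀ x p, |c x p| ≤ Mc := fun x p => isMaxOn_iff.1 hq₀ (x, p) trivial
  have hMc0 : 0 ≤ Mc := (abs_nonneg _).trans (hMc (Classical.arbitrary X) (Classical.arbitrary P))
  have hMc' : ∀ p x, |(fun p x => c x p) p x| ≤ Mc := fun p x => hMc x p
  have hc' : Continuous fun q : P × X => (fun p x => c x p) q.1 q.2 := by
    exact hc.comp (continuous_snd.prodMk continuous_fst)
  set x₀ : X := Classical.arbitrary X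
  -- basic facts about elements of Pc
  have hPc_cont : ∀ φ ∈ Pc c, Continuous φ := by
    rintro φ ⟨ψ, ⟨M, hM⟩, rfl⟩
    exact kant_ctransP_continuous hc hMc hM
  have hPc_bdd : ∀ φ ∈ Pc c, ∃ M, ∀ x, |φ x| ≤ M := by
    rintro φ ⟨ψ, ⟨M, hM⟩, rfl⟩
    exact ⟨Mc + M, kant_abs_ctransP_le hMc hM⟩
  -- equicontinuity-type bound for elements of Pc
  have hPc_ec : ∀ φ ∈ Pc c, ∀ (x x' : X) (ε : ℝ), (∀ p, |c x p - c x' p| ≤ ε) →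
      |φ x - φ x'| ≤ ε := by
    rintro φ ⟨ψ, ⟨M, hM⟩, rfl⟩ x x' ε h
    exact kant_ctransP_cont_diff hMc hM h
  -- ctransX of bounded functions
  have hX_bdd : ∀ (φ : X → ℝ) (M : ℝ), (∀ x, |φ x| ≤ M) → ∀ p, |ctransX c φ p| ≤ Mc + M := by
    intro φ M hM p
    exact kant_abs_ctransP_le (c := fun p x => c x p) hMc' hM p
  have hX_cont : ∀ (φ : X → ℝ) (M : ℝ), (∀ x, |φ x| ≤ M) → Continuous (ctransX c φ) := by
    intro φ M hM
    exact kant_ctransP_continuous (c := fun p x => c x p) hc' hMc' hM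
  -- Lipschitz bound for ctransX
  have hX_lip : ∀ (φ φ' : X → ℝ) (M M' ε : ℝ), (∀ x, |φ x| ≤ M) → (∀ x, |φ' x| ≤ M') →
      (∀ x, |φ x - φ' x| ≤ ε) → ∀ p, |ctransX c φ p - ctransX c φ' p| ≤ ε := by
    intro φ φ' M M' ε hM hM' h p
    exact kant_ctransP_diff_le (c := fun p x => c x p) hMc' hM hM' h p
  -- shift invariance of kantF on Pc
  have hshift : ∀ φ ∈ Pc c, ∀ t : ℝ, (fun x => φ x - t) ∈ Pc c ∧
      kantF c μ ν (fun x => φ x - t) = kantF c μ ν φ := by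
    rintro φ hφPc t
    obtain ⟨ψ, ⟨M, hM⟩, rfl⟩ := hφPc
    have hMt : ∀ p, |ψ p + t| ≤ M + |t| := fun p => (abs_add_le _ _).trans (add_le_add (hM p) le_rfl)
    have hmem : (fun x => ctransP c ψ x - t) ∈ Pc c :=
      ⟨fun p => ψ p + t, ⟨M + |t|, hMt⟩, funext fun x => (kant_ctransP_shift hMc hM t x).symm⟩
    refine ⟨hmem, ?_⟩
    have hφb : ∀ x, |ctransP c ψ x| ≤ Mc + M := kant_abs_ctransP_le hMc hM
    have hφc : Continuous (ctransP c ψ) := kant_ctransP_continuous hc hMc hM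
    have hctb : ∀ p, |ctransX c (ctransP c ψ) p| ≤ Mc + (Mc + M) := hX_bdd _ _ hφb
    have hctc : Continuous (ctransX c (ctransP c ψ)) := hX_cont _ _ hφb
    -- identify the transform of the shift
    have hkey : ctransX c (fun x => ctransP c ψ x - t) = fun p => ctransX c (ctransP c ψ) p + t := by
      funext p
      have := kant_ctransP_shift (c := fun p x => c x p) hMc' (ψ := ctransP c ψ) hφb (-t) p
      simp only [sub_neg_eq_add] at this
      calc ctransX c (fun x => ctransP c ψ x - t) p
          = ctransP (fun p x => c x p) (fun x => ctransP c ψ x + (-t)) p := by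
            simp only [kant_ctransX_eq_ctransP, sub_eq_add_neg]
        _ = ctransX c (ctransP c ψ) p + t := by rw [this]; rfl
    unfold kantF
    rw [hkey]
    rw [integral_sub (kant_integrable_of_bdd hφc hφb) (integrable_const t),
      integral_add (kant_integrable_of_bdd hctc hctb) (integrable_const t)]
    simp [measure_univ]
  -- the normalized class A
  set A : Set (X →ᵇ ℝ) := {f | (⇑f ∈ Pc c) ∧ f x₀ = 0} with hAdef
  -- every normalized element of Pc gives an element of A
  have hnorm : ∀ φ ∈ Pc c, ∃ f : X →ᵇ ℝ, f ∈ A ∧ kantF c μ ν ⇑f = kantF c μ ν φ := by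
    intro φ hφ
    obtain ⟨hmem, heq⟩ := hshift φ hφ (φ x₀)
    have hcont : Continuous fun x => φ x - φ x₀ := (hPc_cont φ hφ).sub continuous_const
    have hbd : ∀ x, |φ x - φ x₀| ≤ 2 * Mc := by
      intro x
      refine hPc_ec φ hφ x x₀ (2 * Mc) fun p => ?_
      have h1 := abs_le.1 (hMc x p); have h2 := abs_le.1 (hMc x₀ p)
      rw [abs_le]; constructor <;> linarith [h1.1, h1.2, h2.1, h2.2]
    refine ⟨BoundedContinuousFunction.ofNormedAddCommGroup _ hcont (2 * Mc)
      (fun x => by simpa [Real.norm_eq_abs] using hbd x), ⟨hmem, by simp⟩, ?_⟩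
    exact heq
  -- A is closed
  have hclosed : IsClosed A := by
    have h1 : IsClosed {f : X →ᵇ ℝ | ⇑f ∈ Pc c} := by
      refine IsSeqClosed.isClosed ?_
      intro F f hF hlim
      have hfb : ∀ x, |f x| ≤ ‖f‖ := fun x => f.norm_coe_le_norm x
      refine ⟨ctransX c ⇑f, ⟨Mc + ‖f‖, hX_bdd _ _ hfb⟩, ?_⟩
      funext x
      have key : ∀ ε > (0:ℝ), |f x - ctransP c (ctransX c ⇑f) x| ≤ 2 * ε := by
        intro ε hε
        obtain ⟨N, hN⟩ := Metric.tendsto_atTop.1 hlim ε hε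
        have hdist : dist (F N) f < ε := hN N le_rfl
        obtain ⟨ψ, ⟨M, hM⟩, hFψ⟩ := hF N
        have htriple : ctransP c (ctransX c ⇑(F N)) = ⇑(F N) := by
          rw [hFψ]; exact kant_triple hMc hM
        have hpt : ∀ y, |f y - (F N) y| ≤ ε := fun y => by
          have := BoundedContinuousFunction.dist_coe_le_dist (f := F N) (g := f) y
          rw [Real.dist_eq] at this
          rw [abs_sub_comm]
          exact this.trans hdist.le
        have hFb : ∀ y, |(F N) y| ≤ ‖F N‖ := fun y => (F N).norm_coe_le_norm y
        have h1 : ∀ p, |ctransX c ⇑f p - ctransX c ⇑(F N) p| ≤ ε :=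
          hX_lip _ _ _ _ ε hfb hFb hpt
        have h2 : |ctransP c (ctransX c ⇑f) x - ctransP c (ctransX c ⇑(F N)) x| ≤ ε :=
          kant_ctransP_diff_le hMc (hX_bdd _ _ hfb) (hX_bdd _ _ hFb) h1 x
        rw [htriple] at h2
        calc |f x - ctransP c (ctransX c ⇑f) x|
            ≤ |f x - (F N) x| + |(F N) x - ctransP c (ctransX c ⇑f) x| := abs_sub_le _ _ _
          _ ≤ ε + ε := add_le_add (hpt x) (by rw [abs_sub_comm]; exact h2)
          _ = 2 * ε := by ring
      by_contra hne
      have hpos : 0 < |f x - ctransP c (ctransX c ⇑f) x| := by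
        rcases eq_or_lt_of_le (abs_nonneg (f x - ctransP c (ctransX c ⇑f) x)) with h | h
        · exact absurd (by have := h.symm; rwa [abs_eq_zero, sub_eq_zero] at this) hne
        · exact h
      have := key (|f x - ctransP c (ctransX c ⇑f) x| / 4) (by linarith)
      linarith
    have h2 : IsClosed {f : X →ᵇ ℝ | f x₀ = 0} :=
      isClosed_eq (continuous_eval_const x₀) continuous_const
    exact h1.inter h2
  -- equicontinuity of A
  have hequi : Equicontinuous ((↑) : A → X → ℝ) := by
    intro x
    rw [Metric.equicontinuousAt_iff]
    intro ε hε
    obtain ⟨δ, hδ, H⟩ := kant_uc hc (ε / 2) (half_pos hε)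
    refine ⟨δ, hδ, fun x' hx' f => ?_⟩
    rw [Real.dist_eq]
    refine lt_of_le_of_lt ?_ (half_lt_self hε)
    exact hPc_ec _ f.2.1 x x' (ε / 2) fun p => H x x' (by rwa [dist_comm] at hx') p
  -- range in a compact set
  have hrange : ∀ f : X →ᵇ ℝ, ∀ x : X, f ∈ A → f x ∈ Set.Icc (-(2 * Mc)) (2 * Mc) := by
    intro f x hf
    have : |f x - f x₀| ≤ 2 * Mc := by
      refine hPc_ec _ hf.1 x x₀ (2 * Mc) fun p => ?_
      have h1 := abs_le.1 (hMc x p); have h2 := abs_le.1 (hMc x₀ p)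
      rw [abs_le]; constructor <;> linarith [h1.1, h1.2, h2.1, h2.2]
    rw [hf.2, sub_zero] at this
    exact abs_le.1 this
  have hcompact : IsCompact A :=
    BoundedContinuousFunction.arzela_ascoli₂ _ isCompact_Icc A hclosed hrange hequi
  -- A is nonempty
  have hPc0 : ctransP c (fun _ => (0:ℝ)) ∈ Pc c := ⟨fun _ => 0, ⟨0, fun p => by simp⟩, rfl⟩
  have hneA : A.Nonempty := by
    obtain ⟨f, hfA, -⟩ := hnorm _ hPc0
    exact ⟨f, hfA⟩
  -- the functional is continuous
  have hGcont : Continuous fun f : X →ᵇ ℝ => kantF c μ ν ⇑f := by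
    refine LipschitzWith.continuous (K := 2) (LipschitzWith.of_dist_le_mul fun f g => ?_)
    have hfb : ∀ x, |f x| ≤ ‖f‖ := fun x => f.norm_coe_le_norm x
    have hgb : ∀ x, |g x| ≤ ‖g‖ := fun x => g.norm_coe_le_norm x
    have hpt : ∀ x, |f x - g x| ≤ dist f g := fun x => by
      have := BoundedContinuousFunction.dist_coe_le_dist (f := f) (g := g) x
      rwa [Real.dist_eq] at this
    have h1 : |(∫ x, f x ∂μ) - ∫ x, g x ∂μ| ≤ dist f g := by
      rw [← integral_sub (kant_integrable_of_bdd f.continuous hfb)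
        (kant_integrable_of_bdd g.continuous hgb)]
      have := norm_integral_le_of_norm_le_const (μ := μ) (C := dist f g)
        (f := fun x => f x - g x)
        (Filter.Eventually.of_forall fun x => by simpa [Real.norm_eq_abs] using hpt x)
      simpa [measure_univ, Real.norm_eq_abs] using this
    have hct : ∀ p, |ctransX c ⇑f p - ctransX c ⇑g p| ≤ dist f g :=
      hX_lip _ _ _ _ _ hfb hgb hpt
    have h2 : |(∫ p, ctransX c ⇑f p ∂ν) - ∫ p, ctransX c ⇑g p ∂ν| ≤ dist f g := by
      rw [← integral_sub (kant_integrable_of_bdd (hX_cont _ _ hfb) (hX_bdd _ _ hfb))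
        (kant_integrable_of_bdd (hX_cont _ _ hgb) (hX_bdd _ _ hgb))]
      have := norm_integral_le_of_norm_le_const (μ := ν) (C := dist f g)
        (f := fun p => ctransX c (⇑f) p - ctransX c (⇑g) p)
        (Filter.Eventually.of_forall fun p => by simpa [Real.norm_eq_abs] using hct p)
      simpa [measure_univ, Real.norm_eq_abs] using this
    rw [Real.dist_eq]
    unfold kantF
    have heq : ((∫ x, f x ∂μ) + ∫ p, ctransX c ⇑f p ∂ν) - ((∫ x, g x ∂μ) + ∫ p, ctransX c ⇑g p ∂ν)
        = ((∫ x, f x ∂μ) - ∫ x, g x ∂μ) + ((∫ p, ctransX c ⇑f p ∂ν) - ∫ p, ctransX c ⇑g p ∂ν) := by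
      ring
    rw [heq]
    calc |_ + _| ≤ _ + _ := abs_add_le _ _
      _ ≤ dist f g + dist f g := add_le_add h1 h2
      _ = 2 * dist f g := by ring
  -- minimize over A
  obtain ⟨f₀, hf₀A, hmin⟩ := hcompact.exists_isMinOn hneA hGcont.continuousOn
  refine ⟨⇑f₀, hf₀A.1, ?_⟩
  intro φ hφ
  obtain ⟨f', hf'A, hf'eq⟩ := hnorm φ hφ
  calc kantF c μ ν ⇑f₀ ≤ kantF c μ ν ⇑f' := hmin hf'A
    _ = kantF c μ ν φ := hf'eq
end

section
/- Let (Ω, ν) be a measure space, m ≥ 1, and let f_1, …, f_N ∈ L²(Ω, ν) and β_1, …, β_N ∈ ℤ^m be such that for every β ∈ ℤ^m, the subfamily {f_i : β_i = β} is linearly independent in L²(Ω, ν). Then there exists a constant C > 0 such that for all coefficients a_1, …, a_N ∈ ℂ and all r ∈ (0,∞)^m, one has ∫_Ω ∫_{T^m} |∑_{i=1}^N a_i f_i(w) r^{β_i} e^{√−1 ⟨β_i, θ⟩}|² dθ dν(w) ≥ C ∑_{i=1}^N |a_i|² r^{2β_i}. In particular, the constant C is independent of a and of r. -/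
open MeasureTheory Complex


lemma aux_int1 (n : ℤ) : ∫ t in Set.Icc (0:ℝ) (2*Real.pi), Complex.exp (Complex.I * n * t) =
    if n = 0 then ((2*Real.pi : ℝ) : ℂ) else 0 := by
  rw [MeasureTheory.integral_Icc_eq_integral_Ioc,
    ← intervalIntegral.integral_of_le (by positivity)]
  by_cases h : n = 0
  · simp [h, Complex.ofReal_mul]
  · rw [if_neg h]
    have hc : (Complex.I * n) ≠ 0 := by
      simp [Complex.I_ne_zero, Complex.ext_iff, h]
    rw [integral_exp_mul_complex hc]
    have : Complex.I * n * ((2*Real.pi : ℝ) : ℂ) = n * (2 * Real.pi * Complex.I) := by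
      push_cast; ring
    rw [this, Complex.exp_int_mul_two_pi_mul_I]
    simp

lemma aux_box (m : ℕ) (n : Fin m → ℤ) :
    ∫ θ in Set.Icc (0 : Fin m → ℝ) (fun _ => 2 * Real.pi),
        Complex.exp (Complex.I * ((∑ k, (n k : ℝ) * θ k : ℝ) : ℂ)) =
      if n = 0 then (((2 * Real.pi) ^ m : ℝ) : ℂ) else 0 := by
  have hptwise : ∀ θ : Fin m → ℝ,
      Complex.exp (Complex.I * ((∑ k, (n k : ℝ) * θ k : ℝ) : ℂ)) =
        ∏ k, Complex.exp (Complex.I * (n k) * (θ k)) := by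
    intro θ
    rw [← Complex.exp_sum]
    congr 1
    push_cast
    rw [Finset.mul_sum]
    congr 1; ext k; ring
  simp_rw [hptwise]
  have hind : ∀ θ : Fin m → ℝ,
      (Set.Icc (0 : Fin m → ℝ) (fun _ => 2 * Real.pi)).indicator
        (fun θ => ∏ k, Complex.exp (Complex.I * (n k) * (θ k))) θ =
      ∏ k, (Set.Icc (0:ℝ) (2*Real.pi)).indicator
        (fun t => Complex.exp (Complex.I * (n k) * t)) (θ k) := by
    intro θ
    by_cases hθ : θ ∈ Set.Icc (0 : Fin m → ℝ) (fun _ => 2 * Real.pi)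
    · rw [Set.indicator_of_mem hθ]
      rw [Set.mem_Icc] at hθ
      refine (Finset.prod_congr rfl fun k _ => ?_).symm
      exact Set.indicator_of_mem (Set.mem_Icc.2 ⟨hθ.1 k, hθ.2 k⟩) _
    · rw [Set.indicator_of_notMem hθ]
      rw [Set.mem_Icc] at hθ
      have : ∃ k, θ k ∉ Set.Icc (0:ℝ) (2*Real.pi) := by
        by_contra hcon
        push_neg at hcon
        exact hθ ⟨fun k => (Set.mem_Icc.1 (hcon k)).1, fun k => (Set.mem_Icc.1 (hcon k)).2⟩
      obtain ⟨k, hk⟩ := this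
      exact (Finset.prod_eq_zero (Finset.mem_univ k)
        (by rw [Set.indicator_of_notMem hk])).symm
  rw [← MeasureTheory.integral_indicator measurableSet_Icc]
  simp_rw [hind]
  rw [MeasureTheory.volume_pi, MeasureTheory.integral_fintype_prod_eq_prod
    (fun k t => (Set.Icc (0:ℝ) (2*Real.pi)).indicator
      (fun t => Complex.exp (Complex.I * (n k) * t)) t)]
  simp_rw [MeasureTheory.integral_indicator measurableSet_Icc, aux_int1]
  by_cases h : n = 0
  · simp [h]
  · rw [if_neg h]
    obtain ⟨k, hk⟩ := Function.ne_iff.1 h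
    exact Finset.prod_eq_zero (Finset.mem_univ k) (by rw [if_neg (by simpa using hk)])


lemma aux_theta (m N : ℕ) (β : Fin N → Fin m → ℤ) (c : Fin N → ℂ) :
    ∫ θ in Set.Icc (0 : Fin m → ℝ) (fun _ => 2 * Real.pi),
        ‖∑ i, c i * Complex.exp (Complex.I * ((∑ k, (β i k : ℝ) * θ k : ℝ) : ℂ))‖ ^ 2 =
      (2 * Real.pi) ^ m * ∑ b ∈ Finset.image β Finset.univ,
        ‖∑ i ∈ Finset.univ.filter (fun i => β i = b), c i‖ ^ 2 := by
  classical
  set K : ℂ := (((2 * Real.pi) ^ m : ℝ) : ℂ) with hK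
  set G : (Fin m → ℝ) → ℂ :=
    fun θ => ∑ i, c i * Complex.exp (Complex.I * ((∑ k, (β i k : ℝ) * θ k : ℝ) : ℂ)) with hG
  have hsq : ∀ z : ℂ, ((‖z‖ ^ 2 : ℝ) : ℂ) = z * (starRingEnd ℂ) z := by
    intro z
    rw [Complex.mul_conj]
    norm_cast
    rw [Complex.sq_norm]
  -- the complex-valued integral
  have key : (∫ θ in Set.Icc (0 : Fin m → ℝ) (fun _ => 2 * Real.pi),
      G θ * (starRingEnd ℂ) (G θ)) =
      ∑ b ∈ Finset.image β Finset.univ,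
        (∑ i ∈ Finset.univ.filter (fun i => β i = b), c i) *
          (starRingEnd ℂ) (∑ i ∈ Finset.univ.filter (fun i => β i = b), c i) * K := by
    have hexpand : ∀ θ : Fin m → ℝ, G θ * (starRingEnd ℂ) (G θ) =
        ∑ i, ∑ j, c i * (starRingEnd ℂ) (c j) *
          Complex.exp (Complex.I * ((∑ k, (((β i - β j) : Fin m → ℤ) k : ℝ) * θ k : ℝ) : ℂ)) := by
      intro θ
      rw [hG]
      rw [map_sum, Finset.sum_mul_sum]
      refine Finset.sum_congr rfl fun i _ => Finset.sum_congr rfl fun j _ => ?_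
      rw [map_mul, ← Complex.exp_conj]
      have hconj : (starRingEnd ℂ) (Complex.I * ((∑ k, (β j k : ℝ) * θ k : ℝ) : ℂ)) =
          -(Complex.I * ((∑ k, (β j k : ℝ) * θ k : ℝ) : ℂ)) := by
        rw [map_mul, Complex.conj_I, Complex.conj_ofReal]; ring
      rw [hconj]
      have harg : Complex.I * ((∑ k, (β i k : ℝ) * θ k : ℝ) : ℂ) +
          -(Complex.I * ((∑ k, (β j k : ℝ) * θ k : ℝ) : ℂ)) =
          Complex.I * ((∑ k, (((β i - β j) : Fin m → ℤ) k : ℝ) * θ k : ℝ) : ℂ) := by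
        simp only [Pi.sub_apply]
        push_cast
        simp_rw [sub_mul]
        rw [Finset.sum_sub_distrib]
        ring
      rw [← harg, Complex.exp_add]; ring
    simp_rw [hexpand]
    have hint : ∀ (i j : Fin N), IntegrableOn (fun θ : Fin m → ℝ =>
        c i * (starRingEnd ℂ) (c j) *
          Complex.exp (Complex.I * ((∑ k, (((β i - β j) : Fin m → ℤ) k : ℝ) * θ k : ℝ) : ℂ)))
        (Set.Icc (0 : Fin m → ℝ) (fun _ => 2 * Real.pi)) := by
      intro i j
      apply Continuous.integrableOn_Icc
      continuity
    rw [integral_finset_sum _ (fun i _ => integrable_finset_sum _ (fun j _ => hint i j))]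
    have : ∀ i : Fin N,
        (∫ θ in Set.Icc (0 : Fin m → ℝ) (fun _ => 2 * Real.pi),
          ∑ j, c i * (starRingEnd ℂ) (c j) *
          Complex.exp (Complex.I * ((∑ k, (((β i - β j) : Fin m → ℤ) k : ℝ) * θ k : ℝ) : ℂ))) =
        ∑ j, c i * (starRingEnd ℂ) (c j) * (if β i = β j then K else 0) := by
      intro i
      rw [integral_finset_sum _ (fun j _ => hint i j)]
      refine Finset.sum_congr rfl fun j _ => ?_
      rw [integral_const_mul, aux_box m (β i - β j)]
      congr 1
      by_cases h : β i = β j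
      · rw [if_pos h, if_pos (sub_eq_zero.2 h)]
      · rw [if_neg h, if_neg (fun hc => h (sub_eq_zero.1 hc))]
    simp_rw [this]
    -- now combinatorics
    have step1 : ∀ i : Fin N,
        (∑ j, c i * (starRingEnd ℂ) (c j) * (if β i = β j then K else 0)) =
        c i * (starRingEnd ℂ) (∑ j ∈ Finset.univ.filter (fun j => β j = β i), c j) * K := by
      intro i
      rw [map_sum, Finset.mul_sum, Finset.sum_mul, Finset.sum_filter]
      refine Finset.sum_congr rfl fun j _ => ?_
      by_cases h : β j = β i
      · rw [if_pos h, if_pos h.symm]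
      · rw [if_neg h, if_neg (fun hc => h hc.symm)]
        ring
    simp_rw [step1]
    rw [← Finset.sum_fiberwise_of_maps_to
      (fun i (_ : i ∈ Finset.univ) => Finset.mem_image_of_mem β (Finset.mem_univ i))
      (fun i => c i * (starRingEnd ℂ) (∑ j ∈ Finset.univ.filter (fun j => β j = β i), c j) * K)]
    refine Finset.sum_congr rfl fun b hb => ?_
    have hfib : ∀ i ∈ Finset.univ.filter (fun i => β i = b),
        c i * (starRingEnd ℂ) (∑ j ∈ Finset.univ.filter (fun j => β j = β i), c j) * K =
        c i * ((starRingEnd ℂ) (∑ j ∈ Finset.univ.filter (fun j => β j = b), c j) * K) := by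
      intro i hi
      rw [(Finset.mem_filter.1 hi).2]
      ring
    rw [Finset.sum_congr rfl hfib, ← Finset.sum_mul]
    ring
  -- go back to the real statement
  have lhs_eq : ((∫ θ in Set.Icc (0 : Fin m → ℝ) (fun _ => 2 * Real.pi), ‖G θ‖ ^ 2 : ℝ) : ℂ) =
      ∫ θ in Set.Icc (0 : Fin m → ℝ) (fun _ => 2 * Real.pi), G θ * (starRingEnd ℂ) (G θ) := by
    refine (integral_ofReal (𝕜 := ℂ)).symm.trans ?_
    exact integral_congr_ae (Filter.Eventually.of_forall fun θ => hsq (G θ))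
  have rhs_eq : (((2 * Real.pi) ^ m * ∑ b ∈ Finset.image β Finset.univ,
        ‖∑ i ∈ Finset.univ.filter (fun i => β i = b), c i‖ ^ 2 : ℝ) : ℂ) =
      ∑ b ∈ Finset.image β Finset.univ,
        (∑ i ∈ Finset.univ.filter (fun i => β i = b), c i) *
          (starRingEnd ℂ) (∑ i ∈ Finset.univ.filter (fun i => β i = b), c i) * K := by
    push_cast
    rw [Finset.mul_sum]
    refine Finset.sum_congr rfl fun b _ => ?_
    rw [← hsq, hK]
    push_cast
    ring
  exact_mod_cast lhs_eq.trans (key.trans rhs_eq.symm)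

lemma aux_gram {Ω : Type*} [MeasurableSpace Ω] (ν : Measure Ω) {N : ℕ}
    (f : Fin N → Ω → ℂ) (hf : ∀ i, MemLp (f i) 2 ν) (S : Finset (Fin N))
    (hli : ∀ a : Fin N → ℂ, (∀ i, i ∉ S → a i = 0) →
      (∀ᵐ w ∂ν, ∑ i, a i * f i w = 0) → ∀ i, a i = 0) :
    ∃ c > (0 : ℝ), ∀ d : Fin N → ℂ,
      c * ∑ i ∈ S, ‖d i‖ ^ 2 ≤ ∫ w, ‖∑ i ∈ S, d i * f i w‖ ^ 2 ∂ν := by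
  classical
  -- the combined function is in L²
  have hmem : ∀ x : EuclideanSpace ℂ {i // i ∈ S},
      MemLp (fun w => ∑ i : {i // i ∈ S}, x i * f i w) 2 ν :=
    fun x => memLp_finset_sum _ (fun i _ => (hf i.1).const_mul (x i))
  -- the linear map from coefficients to L²
  let L : EuclideanSpace ℂ {i // i ∈ S} →ₗ[ℂ] Lp ℂ 2 ν :=
    { toFun := fun x => (hmem x).toLp _
      map_add' := by
        intro x y
        rw [← MemLp.toLp_add (hmem x) (hmem y)]
        refine MemLp.toLp_congr _ _ (Filter.Eventually.of_forall fun w => ?_)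
        simp only [Pi.add_apply, PiLp.add_apply, ← Finset.sum_add_distrib]
        exact Finset.sum_congr rfl fun i _ => by ring
      map_smul' := by
        intro t x
        dsimp only
        rw [RingHom.id_apply, ← MemLp.toLp_const_smul t (hmem x)]
        refine MemLp.toLp_congr _ _ (Filter.Eventually.of_forall fun w => ?_)
        simp only [Pi.smul_apply, PiLp.smul_apply, smul_eq_mul, Finset.mul_sum]
        exact Finset.sum_congr rfl fun i _ => by ring }
  -- kernel is trivial
  have hker : LinearMap.ker L = ⊥ := by
    rw [LinearMap.ker_eq_bot']
    intro x hx
    have h0 : (fun w => ∑ i : {i // i ∈ S}, x i * f i w) =ᵐ[ν] 0 := by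
      refine ((hmem x).coeFn_toLp).symm.trans ?_
      have : (hmem x).toLp _ = (0 : Lp ℂ 2 ν) := hx
      rw [this]
      exact Lp.coeFn_zero _ _ _
    set a : Fin N → ℂ := fun i => if h : i ∈ S then x ⟨i, h⟩ else 0 with ha
    have haz : ∀ i, i ∉ S → a i = 0 := fun i h => by simp [ha, h]
    have hae : ∀ᵐ w ∂ν, ∑ i, a i * f i w = 0 := by
      filter_upwards [h0] with w hw
      have : ∑ i, a i * f i w = ∑ i : {i // i ∈ S}, x i * f i w := by
        rw [show (∑ i, a i * f i w) = ∑ i ∈ S, a i * f i w from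
          (Finset.sum_subset (Finset.subset_univ S)
            (fun i _ hi => by rw [haz i hi, zero_mul])).symm,
          ← Finset.sum_coe_sort S (fun i => a i * f i w)]
        refine Finset.sum_congr rfl fun i _ => ?_
        simp [ha, i.2]
      rw [this, hw]
      rfl
    have := hli a haz hae
    ext i -- x = 0
    have := this i
    simp [ha, i.2] at this
    simpa using this
  obtain ⟨K, hK0, hKa⟩ := L.exists_antilipschitzWith hker
  have hsq : ∀ z : ℂ, ((‖z‖ ^ 2 : ℝ) : ℂ) = (starRingEnd ℂ) z * z := by
    intro z
    rw [mul_comm, Complex.mul_conj]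
    norm_cast
    rw [Complex.sq_norm]
  have hnorm : ∀ x : EuclideanSpace ℂ {i // i ∈ S},
      ‖L x‖ ^ 2 = ∫ w, ‖∑ i : {i // i ∈ S}, x i * f i w‖ ^ 2 ∂ν := by
    intro x
    rw [← inner_self_eq_norm_sq (𝕜 := ℂ) (L x), MeasureTheory.L2.inner_def]
    have hcoe : ∀ᵐ w ∂ν, (L x : Ω → ℂ) w = ∑ i : {i // i ∈ S}, x i * f i w :=
      (hmem x).coeFn_toLp
    have : ∫ w, (inner ℂ ((L x : Ω → ℂ) w) ((L x : Ω → ℂ) w) : ℂ) ∂ν =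
        ∫ w, ((‖∑ i : {i // i ∈ S}, x i * f i w‖ ^ 2 : ℝ) : ℂ) ∂ν := by
      refine integral_congr_ae ?_
      filter_upwards [hcoe] with w hw
      rw [hw, RCLike.inner_apply, hsq]
      exact mul_comm _ _
    rw [this, show (∫ w, ((‖∑ i : {i // i ∈ S}, x i * f i w‖ ^ 2 : ℝ) : ℂ) ∂ν) =
      (((∫ w, ‖∑ i : {i // i ∈ S}, x i * f i w‖ ^ 2 ∂ν : ℝ)) : ℂ) from integral_ofReal (𝕜 := ℂ)]
    simp
  refine ⟨((K : ℝ)⁻¹) ^ 2, by positivity, fun d => ?_⟩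
  set x : EuclideanSpace ℂ {i // i ∈ S} := WithLp.toLp 2 (fun i => d i) with hx
  have hsum : ∑ i ∈ S, ‖d i‖ ^ 2 = ‖x‖ ^ 2 := by
    rw [EuclideanSpace.norm_eq, Real.sq_sqrt (Finset.sum_nonneg fun i _ => by positivity),
      ← Finset.sum_coe_sort S (fun i => ‖d i‖ ^ 2)]
  have hle : (K : ℝ)⁻¹ * ‖x‖ ≤ ‖L x‖ := by
    rw [inv_mul_le_iff₀ (by exact_mod_cast hK0)]
    exact hKa.le_mul_norm (by simp) x
  have h2 : ((K : ℝ)⁻¹ * ‖x‖) ^ 2 ≤ ‖L x‖ ^ 2 := by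
    apply pow_le_pow_left₀ (by positivity) hle
  calc ((K : ℝ)⁻¹) ^ 2 * ∑ i ∈ S, ‖d i‖ ^ 2 = ((K : ℝ)⁻¹ * ‖x‖) ^ 2 := by
        rw [hsum]; ring
    _ ≤ ‖L x‖ ^ 2 := h2
    _ = ∫ w, ‖∑ i : {i // i ∈ S}, x i * f i w‖ ^ 2 ∂ν := hnorm x
    _ = ∫ w, ‖∑ i ∈ S, d i * f i w‖ ^ 2 ∂ν := by
        congr 1
        funext w
        rw [← Finset.sum_coe_sort S (fun i => d i * f i w)]


/-- `L²`-almost orthogonality: let `(Ω, ν)` be a measure space, `m ≥ 1`, and let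
`f 1, …, f N ∈ L²(Ω, ν)` and `β 1, …, β N ∈ ℤ^m` be such that for each `β ∈ ℤ^m` the
subfamily `{f i : β i = β}` is linearly independent in `L²(Ω, ν)`.  Then there is a
constant `C > 0`, independent of the coefficients `a` and of `r ∈ (0,∞)^m`, with
`∫_Ω ∫_{T^m} |∑ i, a i * f i w * r^{β i} * e^{√-1 ⟨β i, θ⟩}|² dθ dν(w)
  ≥ C * ∑ i, |a i|² r^{2 β i}`. -/
theorem l2_almost_orthogonality
    {Ω : Type*} [MeasurableSpace Ω] (ν : Measure Ω)
    {m N : ℕ} (hm : 1 ≤ m)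
    (f : Fin N → Ω → ℂ) (hf : ∀ i, MemLp (f i) 2 ν)
    (β : Fin N → Fin m → ℤ)
    (hindep : ∀ b : Fin m → ℤ, ∀ a : Fin N → ℂ,
      (∀ i, β i ≠ b → a i = 0) →
      (∀ᵐ w ∂ν, ∑ i, a i * f i w = 0) →
      ∀ i, a i = 0) :
    ∃ C > (0 : ℝ), ∀ (a : Fin N → ℂ) (r : Fin m → ℝ), (∀ k, 0 < r k) →
      C * ∑ i, ‖a i‖ ^ 2 * ∏ k, r k ^ (2 * β i k) ≤
        ∫ w, (∫ θ in Set.Icc (0 : Fin m → ℝ) (fun _ => 2 * Real.pi),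
          ‖∑ i, a i * f i w * (↑(∏ k, r k ^ β i k) : ℂ) *
            Complex.exp (Complex.I * (↑(∑ k, (β i k : ℝ) * θ k) : ℂ))‖ ^ 2) ∂ν := by
  classical
  set B : Finset (Fin m → ℤ) := Finset.image β Finset.univ with hB
  -- fiberwise Gram constants
  have hgram : ∀ b : Fin m → ℤ, ∃ c > (0 : ℝ), ∀ d : Fin N → ℂ,
      c * ∑ i ∈ Finset.univ.filter (fun i => β i = b), ‖d i‖ ^ 2 ≤
        ∫ w, ‖∑ i ∈ Finset.univ.filter (fun i => β i = b), d i * f i w‖ ^ 2 ∂ν := by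
    intro b
    refine aux_gram ν f hf _ (fun a haz hae => hindep b a (fun i hib => ?_) hae)
    exact haz i (by simp [hib])
  choose c hc0 hcP using hgram
  -- a uniform positive constant
  set B' : Finset (Fin m → ℤ) := insert 0 B with hB'
  have hB'ne : B'.Nonempty := Finset.insert_nonempty _ _
  set cmin : ℝ := B'.inf' hB'ne c with hcmin
  have hcmin0 : 0 < cmin := by
    rw [hcmin, Finset.lt_inf'_iff]
    exact fun b _ => hc0 b
  have hcminle : ∀ b ∈ B, cmin ≤ c b := fun b hb =>
    Finset.inf'_le _ (Finset.mem_insert_of_mem hb)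
  refine ⟨(2 * Real.pi) ^ m * cmin, by positivity, fun a r hr => ?_⟩
  set d : Fin N → ℂ := fun i => a i * ((∏ k, r k ^ β i k : ℝ) : ℂ) with hd
  -- compute the inner integral pointwise
  have hpoint : ∀ w : Ω,
      (∫ θ in Set.Icc (0 : Fin m → ℝ) (fun _ => 2 * Real.pi),
        ‖∑ i, a i * f i w * (↑(∏ k, r k ^ β i k) : ℂ) *
          Complex.exp (Complex.I * (↑(∑ k, (β i k : ℝ) * θ k) : ℂ))‖ ^ 2) =
      (2 * Real.pi) ^ m * ∑ b ∈ B,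
        ‖∑ i ∈ Finset.univ.filter (fun i => β i = b), d i * f i w‖ ^ 2 := by
    intro w
    have h1 : ∀ θ : Fin m → ℝ,
        (∑ i, a i * f i w * (↑(∏ k, r k ^ β i k) : ℂ) *
          Complex.exp (Complex.I * (↑(∑ k, (β i k : ℝ) * θ k) : ℂ))) =
        ∑ i, (d i * f i w) * Complex.exp (Complex.I * (↑(∑ k, (β i k : ℝ) * θ k) : ℂ)) := by
      intro θ
      exact Finset.sum_congr rfl fun i _ => by rw [hd]; ring
    simp_rw [h1]
    rw [aux_theta m N β (fun i => d i * f i w)]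
  have hmemb : ∀ b : Fin m → ℤ,
      MemLp (fun w => ∑ i ∈ Finset.univ.filter (fun i => β i = b), d i * f i w) 2 ν :=
    fun b => memLp_finset_sum _ (fun i _ => (hf i).const_mul (d i))
  have hIntb : ∀ b : Fin m → ℤ,
      Integrable (fun w => ‖∑ i ∈ Finset.univ.filter (fun i => β i = b), d i * f i w‖ ^ 2) ν :=
    fun b => (memLp_two_iff_integrable_sq_norm (hmemb b).aestronglyMeasurable).1 (hmemb b)
  -- compute the outer integral
  have houter :
      (∫ w, (∫ θ in Set.Icc (0 : Fin m → ℝ) (fun _ => 2 * Real.pi),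
        ‖∑ i, a i * f i w * (↑(∏ k, r k ^ β i k) : ℂ) *
          Complex.exp (Complex.I * (↑(∑ k, (β i k : ℝ) * θ k) : ℂ))‖ ^ 2) ∂ν) =
      (2 * Real.pi) ^ m * ∑ b ∈ B,
        ∫ w, ‖∑ i ∈ Finset.univ.filter (fun i => β i = b), d i * f i w‖ ^ 2 ∂ν := by
    rw [integral_congr_ae (Filter.Eventually.of_forall hpoint), integral_const_mul,
      integral_finset_sum _ (fun b _ => hIntb b)]
  rw [houter]
  -- lower bound each fiber integral
  have hfiber : ∀ b ∈ B,
      cmin * ∑ i ∈ Finset.univ.filter (fun i => β i = b), ‖d i‖ ^ 2 ≤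
        ∫ w, ‖∑ i ∈ Finset.univ.filter (fun i => β i = b), d i * f i w‖ ^ 2 ∂ν := by
    intro b hb
    refine le_trans ?_ (hcP b d)
    apply mul_le_mul_of_nonneg_right (hcminle b hb)
    exact Finset.sum_nonneg fun i _ => by positivity
  have hsum : ∑ b ∈ B, ∑ i ∈ Finset.univ.filter (fun i => β i = b), ‖d i‖ ^ 2 =
      ∑ i, ‖d i‖ ^ 2 :=
    Finset.sum_fiberwise_of_maps_to
      (fun i _ => Finset.mem_image_of_mem β (Finset.mem_univ i)) _
  have hnd : ∀ i, ‖d i‖ ^ 2 = ‖a i‖ ^ 2 * ∏ k, r k ^ (2 * β i k) := by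
    intro i
    have hprodpos : (0 : ℝ) < ∏ k, r k ^ β i k :=
      Finset.prod_pos fun k _ => zpow_pos (hr k) _
    rw [hd, norm_mul, mul_pow, Complex.norm_real, Real.norm_eq_abs,
      abs_of_pos hprodpos]
    congr 1
    rw [← Finset.prod_pow]
    refine Finset.prod_congr rfl fun k _ => ?_
    rw [sq, ← zpow_add₀ (hr k).ne', two_mul]
  calc (2 * Real.pi) ^ m * cmin * ∑ i, ‖a i‖ ^ 2 * ∏ k, r k ^ (2 * β i k)
      = (2 * Real.pi) ^ m * (cmin * ∑ i, ‖d i‖ ^ 2) := by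
        simp_rw [hnd]; ring
    _ = (2 * Real.pi) ^ m *
          ∑ b ∈ B, cmin * ∑ i ∈ Finset.univ.filter (fun i => β i = b), ‖d i‖ ^ 2 := by
        rw [← Finset.mul_sum, hsum]
    _ ≤ (2 * Real.pi) ^ m * ∑ b ∈ B,
          ∫ w, ‖∑ i ∈ Finset.univ.filter (fun i => β i = b), d i * f i w‖ ^ 2 ∂ν := by
        apply mul_le_mul_of_nonneg_left (Finset.sum_le_sum hfiber) (by positivity)
end
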